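/- For the vector field X associated to u̇ = -v + h, v̇ = u + h, ẇ = -w + h with h(u,v,w) = (1/2)u² + a₂v² + (-a₂ - 1/2)w² + (2a₂ - 1)uv - 2a₂uw + vw, the polynomial F(u,v,w) = -2w + (u-w)² + 2a₂(v-w)² satisfies XF = -F. -/

import Mathlib

noncomputable def h3 (a₂ u v w : ℝ) : ℝ :=
  (1/2)*u^2 + a₂*v^2 + (-a₂ - 1/2)*w^2 + (2*a₂ - 1)*u*v - 2*a₂*u*w + v*w

noncomputable def F3 (a₂ u v w : ℝ) : ℝ :=
  -2*w + (u - w)^2 + 2*a₂*(v - w)^2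

/-- F = 0 is an invariant algebraic surface with cofactor -1. -/
theorem stmt_3 : ∀ a₂ u v w : ℝ,
    (-v + h3 a₂ u v w) * deriv (fun s => F3 a₂ s v w) u
    + (u + h3 a₂ u v w) * deriv (fun s => F3 a₂ u s w) v
    + (-w + h3 a₂ u v w) * deriv (fun s => F3 a₂ u v s) w
    = -F3 a₂ u v w := by
  intro a₂ u v w
  have d1 : deriv (fun s => F3 a₂ s v w) u = 2*(u - w) := by
    have : (fun s => F3 a₂ s v w) = fun s => -2*w + (s - w)^2 + 2*a₂*(v - w)^2 := rfl
    rw [this]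
    have := ((hasDerivAt_id u).sub_const w).pow 2
    have h' := (((hasDerivAt_const u (-2*w)).add this).add
      (hasDerivAt_const u (2*a₂*(v - w)^2))).deriv
    simpa using h'
  have d2 : deriv (fun s => F3 a₂ u s w) v = 2*a₂*(2*(v - w)) := by
    have : (fun s => F3 a₂ u s w) = fun s => -2*w + (u - w)^2 + 2*a₂*(s - w)^2 := rfl
    rw [this]
    have := (((hasDerivAt_id v).sub_const w).pow 2).const_mul (2*a₂)
    have h' := (((hasDerivAt_const v (-2*w)).add
      (hasDerivAt_const v ((u - w)^2))).add this).deriv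
    simp only [id_eq] at h'
    refine h'.trans ?_; push_cast; ring
  have d3 : deriv (fun s => F3 a₂ u v s) w
      = -2 + 2*(u - w)*(-1) + 2*a₂*(2*(v - w)*(-1)) := by
    have : (fun s => F3 a₂ u v s) = fun s => -2*s + (u - s)^2 + 2*a₂*(v - s)^2 := rfl
    rw [this]
    have h1 : HasDerivAt (fun s : ℝ => -2*s) (-2) w := by
      simpa using (hasDerivAt_id w).const_mul (-2 : ℝ)
    have h2 : HasDerivAt (fun s : ℝ => (u - s)^2) (2*(u - w)*(-1)) w := by
      have := ((hasDerivAt_const w u).sub (hasDerivAt_id w)).pow 2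
      simp at this ⊢; exact this
    have h3 : HasDerivAt (fun s : ℝ => 2*a₂*(v - s)^2) (2*a₂*(2*(v - w)*(-1))) w := by
      have := (((hasDerivAt_const w v).sub (hasDerivAt_id w)).pow 2).const_mul (2*a₂)
      simpa using this
    have := ((h1.add h2).add h3).deriv
    simp at this ⊢; exact this
  rw [d1, d2, d3]
  simp only [h3, F3]
  ring
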